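/- arXiv:1412.2187 — 6 statements merged into one kernel-verified Lean document; each statement's English description precedes it below -/
import Mathlib

section
/- Let ε, r ∈ [0,1] with r < ε and 1 + r - 2ε > 0, and set β₁* = log((ε-r)/(1+r-2ε)) and β₂* = (1/2)log(r(1+r-2ε)/(ε-r)²) (assuming r > 0). Then ε = (e^{β₁*} + e^{2β₁*+2β₂*})/(1 + 2e^{β₁*} + e^{2β₁*+2β₂*}) and r = e^{2β₁*+2β₂*}/(1 + 2e^{β₁*} + e^{2β₁*+2β₂*}). -/
open Real

theorem stmt_5 (ε r : ℝ) (hε : ε ∈ Set.Icc (0:ℝ) 1) (hr : r ∈ Set.Icc (0:ℝ) 1)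
    (hrpos : 0 < r) (hrε : r < ε) (hfeas : 0 < 1 + r - 2 * ε)
    (β₁ β₂ : ℝ)
    (hβ₁ : β₁ = Real.log ((ε - r) / (1 + r - 2 * ε)))
    (hβ₂ : β₂ = (1 / 2) * Real.log (r * (1 + r - 2 * ε) / (ε - r) ^ 2)) :
    ε = (Real.exp β₁ + Real.exp (2 * β₁ + 2 * β₂))
        / (1 + 2 * Real.exp β₁ + Real.exp (2 * β₁ + 2 * β₂)) ∧
    r = Real.exp (2 * β₁ + 2 * β₂)
        / (1 + 2 * Real.exp β₁ + Real.exp (2 * β₁ + 2 * β₂)) := by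
  have hεr : 0 < ε - r := by linarith
  have h1 : Real.exp β₁ = (ε - r) / (1 + r - 2 * ε) := by
    rw [hβ₁, Real.exp_log (div_pos hεr hfeas)]
  have h2 : Real.exp (2 * β₁ + 2 * β₂) = r / (1 + r - 2 * ε) := by
    have harg : 0 < r * (1 + r - 2 * ε) / (ε - r) ^ 2 :=
      div_pos (mul_pos hrpos hfeas) (pow_pos hεr 2)
    have : Real.exp (2 * β₁ + 2 * β₂) = (Real.exp β₁)^2 * Real.exp (2 * β₂) := by
      rw [Real.exp_add, ← Real.exp_nat_mul]
      norm_num [mul_comm]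
    rw [this, h1, hβ₂]
    have : (2:ℝ) * ((1/2) * Real.log (r * (1 + r - 2 * ε) / (ε - r) ^ 2))
        = Real.log (r * (1 + r - 2 * ε) / (ε - r) ^ 2) := by ring
    rw [this, Real.exp_log harg]
    field_simp
  rw [h1, h2]
  have hd : 1 + 2 * ((ε - r) / (1 + r - 2 * ε)) + r / (1 + r - 2 * ε)
      = 1 / (1 + r - 2 * ε) := by
    field_simp
    ring
  rw [hd]
  constructor <;> field_simp
  rw [mul_div_cancel_left₀ _ (by linarith : (1 + r - ε * 2) ≠ 0)]
  ring
end

section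
/- For 0 < r < ε and 1 + r − 2ε > 0, the partial derivative of λ(ε,r) with respect to ε equals −log((ε−r)/(1+r−2ε)); consequently λ is nondecreasing in ε if and only if 1 + 2r ≥ 3ε. -/
open Real

noncomputable def entropyDensity (ε r : ℝ) : ℝ :=
  -ε * Real.log ((ε - r) / (1 + r - 2 * ε))
    - (r / 2) * Real.log (r * (1 + r - 2 * ε) / (ε - r) ^ 2)
    + (1 / 2) * Real.log (1 / (4 * (1 + r - 2 * ε)))

theorem stmt_8 (ε r : ℝ) (hr0 : 0 < r) (hrε : r < ε) (hε1 : ε < 1)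
    (hfeas : 0 < 1 + r - 2 * ε) :
    HasDerivAt (fun e => entropyDensity e r)
      (-Real.log ((ε - r) / (1 + r - 2 * ε))) ε ∧
    (0 ≤ -Real.log ((ε - r) / (1 + r - 2 * ε)) ↔ 3 * ε ≤ 1 + 2 * r) := by
  have hA : 0 < ε - r := by linarith
  constructor
  · -- derivative part
    set g : ℝ → ℝ := fun e =>
      -e * (Real.log (e - r) - Real.log (1 + r - 2 * e))
        - (r / 2) * (Real.log r + Real.log (1 + r - 2 * e) - 2 * Real.log (e - r))
        + (1 / 2) * (-(Real.log 4 + Real.log (1 + r - 2 * e))) with hg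
    have h1 : HasDerivAt (fun e : ℝ => e - r) 1 ε := (hasDerivAt_id ε).sub_const r
    have h2 : HasDerivAt (fun e : ℝ => 1 + r - 2 * e) (-2) ε := by
      have := ((hasDerivAt_id ε).const_mul 2).const_sub (1 + r)
      simpa using this
    have hL1 : HasDerivAt (fun e : ℝ => Real.log (e - r)) (1 / (ε - r)) ε :=
      h1.log (ne_of_gt hA)
    have hL2 : HasDerivAt (fun e : ℝ => Real.log (1 + r - 2 * e))
        (-2 / (1 + r - 2 * ε)) ε := h2.log (ne_of_gt hfeas)
    have hgd : HasDerivAt g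
        ((-1) * (Real.log (ε - r) - Real.log (1 + r - 2 * ε)) + -ε * (1 / (ε - r) - -2 / (1 + r - 2 * ε))
          - (r / 2) * (0 + -2 / (1 + r - 2 * ε) - 2 * (1 / (ε - r)))
          + (1 / 2) * (-(0 + -2 / (1 + r - 2 * ε)))) ε := by
      exact ((((hasDerivAt_id ε).neg.mul (hL1.sub hL2)).sub
        (((hasDerivAt_const ε (Real.log r)).add hL2).sub (hL1.const_mul 2)
          |>.const_mul (r / 2))).add
        (((hasDerivAt_const ε (Real.log 4)).add hL2).neg.const_mul (1 / 2)))
    have hval : ((-1) * (Real.log (ε - r) - Real.log (1 + r - 2 * ε)) + -ε * (1 / (ε - r) - -2 / (1 + r - 2 * ε))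
          - (r / 2) * (0 + -2 / (1 + r - 2 * ε) - 2 * (1 / (ε - r)))
          + (1 / 2) * (-(0 + -2 / (1 + r - 2 * ε))))
        = -Real.log ((ε - r) / (1 + r - 2 * ε)) := by
      rw [Real.log_div (ne_of_gt hA) (ne_of_gt hfeas)]
      field_simp
      have hB : (1 - ε * 2 + r) ≠ 0 := by intro h; linarith
      field_simp
      ring
    rw [hval] at hgd
    apply hgd.congr_of_eventuallyEq
    have hmem : Set.Ioo r ((1 + r) / 2) ∈ nhds ε := by
      apply isOpen_Ioo.mem_nhds
      constructor <;> [exact hrε; linarith]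
    filter_upwards [hmem] with e he
    obtain ⟨he1, he2⟩ := he
    have hea : (0:ℝ) < e - r := by linarith
    have heb : (0:ℝ) < 1 + r - 2 * e := by linarith
    unfold entropyDensity
    rw [Real.log_div (ne_of_gt hea) (ne_of_gt heb),
      Real.log_div (by positivity) (by positivity),
      Real.log_mul (ne_of_gt hr0) (ne_of_gt heb),
      Real.log_pow, Real.log_div one_ne_zero (by positivity),
      Real.log_mul (by norm_num) (ne_of_gt heb), Real.log_one]
    ring
  · rw [neg_nonneg, Real.log_nonpos_iff (by positivity),
      div_le_one hfeas]
    constructor <;> intro h <;> linarith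
end

section
/- For 0 < r < ε and 1 + r − 2ε > 0, the partial derivative of λ(ε,r) with respect to r equals −(1/2) log(r(1+r−2ε)/(ε−r)²); consequently ∂λ/∂r ≥ 0 if and only if r ≤ ε² (i.e., λ is increasing in r below the Erdős–Rényi curve and decreasing above it). -/
open Real

theorem stmt_9 (ε r : ℝ) (hr0 : 0 < r) (hrε : r < ε) (hε1 : ε < 1)
    (hfeas : 0 < 1 + r - 2 * ε) :
    HasDerivAt (fun r' => entropyDensity ε r')
      (-(1 / 2) * Real.log (r * (1 + r - 2 * ε) / (ε - r) ^ 2)) r ∧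
    (0 ≤ -(1 / 2) * Real.log (r * (1 + r - 2 * ε) / (ε - r) ^ 2) ↔ r ≤ ε ^ 2) := by
  have ha : 0 < ε - r := by linarith
  have hb : 0 < 1 + r - 2 * ε := hfeas
  constructor
  · -- derivative part
    set g : ℝ → ℝ := fun x =>
      -ε * (Real.log (ε - x) - Real.log (1 + x - 2 * ε))
        - (x / 2) * (Real.log x + Real.log (1 + x - 2 * ε) - 2 * Real.log (ε - x))
        + (1 / 2) * (-(Real.log 4 + Real.log (1 + x - 2 * ε))) with hg
    have h1 : HasDerivAt (fun x : ℝ => ε - x) (-1) r := by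
      simpa using (hasDerivAt_id r).const_sub ε
    have h2 : HasDerivAt (fun x : ℝ => 1 + x - 2 * ε) 1 r := by
      simpa using ((hasDerivAt_id r).const_add 1).sub_const (2 * ε)
    have hlog1 : HasDerivAt (fun x : ℝ => Real.log (ε - x)) (-1 / (ε - r)) r :=
      h1.log ha.ne'
    have hlog2 : HasDerivAt (fun x : ℝ => Real.log (1 + x - 2 * ε)) (1 / (1 + r - 2 * ε)) r :=
      h2.log hb.ne'
    have hlog3 : HasDerivAt Real.log r⁻¹ r := Real.hasDerivAt_log hr0.ne'
    have hA : HasDerivAt (fun x : ℝ =>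
        -ε * (Real.log (ε - x) - Real.log (1 + x - 2 * ε)))
        (-ε * (-1 / (ε - r) - 1 / (1 + r - 2 * ε))) r :=
      (hlog1.sub hlog2).const_mul (-ε)
    have hF : HasDerivAt (fun x : ℝ =>
        Real.log x + Real.log (1 + x - 2 * ε) - 2 * Real.log (ε - x))
        (r⁻¹ + 1 / (1 + r - 2 * ε) - 2 * (-1 / (ε - r))) r :=
      (hlog3.add hlog2).sub (hlog1.const_mul 2)
    have hx2 : HasDerivAt (fun x : ℝ => x / 2) (1 / 2) r := by
      simpa using (hasDerivAt_id r).div_const 2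
    have hB : HasDerivAt (fun x : ℝ =>
        (x / 2) * (Real.log x + Real.log (1 + x - 2 * ε) - 2 * Real.log (ε - x)))
        ((1 / 2) * (Real.log r + Real.log (1 + r - 2 * ε) - 2 * Real.log (ε - r))
          + (r / 2) * (r⁻¹ + 1 / (1 + r - 2 * ε) - 2 * (-1 / (ε - r)))) r :=
      hx2.mul hF
    have hC : HasDerivAt (fun x : ℝ =>
        (1 / 2) * (-(Real.log 4 + Real.log (1 + x - 2 * ε))))
        ((1 / 2) * (-(1 / (1 + r - 2 * ε)))) r :=
      ((hlog2.const_add (Real.log 4)).neg).const_mul (1 / 2)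
    have hg' : HasDerivAt g
        ((-ε * (-1 / (ε - r) - 1 / (1 + r - 2 * ε)))
          - ((1 / 2) * (Real.log r + Real.log (1 + r - 2 * ε) - 2 * Real.log (ε - r))
            + (r / 2) * (r⁻¹ + 1 / (1 + r - 2 * ε) - 2 * (-1 / (ε - r))))
          + (1 / 2) * (-(1 / (1 + r - 2 * ε)))) r :=
      (hA.sub hB).add hC
    have heq : (fun r' => entropyDensity ε r') =ᶠ[nhds r] g := by
      have hmem : Set.Ioo (max 0 (2 * ε - 1)) ε ∈ nhds r := by
        apply Ioo_mem_nhds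
        · exact max_lt hr0 (by linarith)
        · exact hrε
      filter_upwards [hmem] with x hx
      obtain ⟨hx1, hx2⟩ := hx
      have hx0 : 0 < x := lt_of_le_of_lt (le_max_left _ _) hx1
      have hxa : 0 < ε - x := by linarith
      have hxb : 0 < 1 + x - 2 * ε := by
        have := lt_of_le_of_lt (le_max_right _ _) hx1
        linarith
      show entropyDensity ε x = g x
      rw [entropyDensity, hg]
      rw [Real.log_div hxa.ne' hxb.ne',
        Real.log_div (by positivity : x * (1 + x - 2 * ε) ≠ 0) (by positivity : (ε - x) ^ 2 ≠ 0),
        Real.log_mul hx0.ne' hxb.ne', Real.log_pow, one_div (4 * (1 + x - 2 * ε)),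
        Real.log_inv, Real.log_mul (by norm_num : (4:ℝ) ≠ 0) hxb.ne']
      push_cast
      ring
    have hD : HasDerivAt (fun r' => entropyDensity ε r')
        ((-ε * (-1 / (ε - r) - 1 / (1 + r - 2 * ε)))
          - ((1 / 2) * (Real.log r + Real.log (1 + r - 2 * ε) - 2 * Real.log (ε - r))
            + (r / 2) * (r⁻¹ + 1 / (1 + r - 2 * ε) - 2 * (-1 / (ε - r))))
          + (1 / 2) * (-(1 / (1 + r - 2 * ε)))) r :=
      hg'.congr_of_eventuallyEq heq
    convert hD using 1
    rw [Real.log_div (by positivity : r * (1 + r - 2 * ε) ≠ 0)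
        (by positivity : (ε - r) ^ 2 ≠ 0),
      Real.log_mul hr0.ne' hb.ne', Real.log_pow]
    push_cast
    field_simp
    ring
  · have hpos : 0 < r * (1 + r - 2 * ε) / (ε - r) ^ 2 := by positivity
    rw [neg_mul, le_neg, neg_zero]
    constructor
    · intro h
      have hL : Real.log (r * (1 + r - 2 * ε) / (ε - r) ^ 2) ≤ 0 := by nlinarith
      have := (Real.log_nonpos_iff hpos.le).mp hL
      rw [div_le_one (by positivity)] at this
      nlinarith
    · intro h
      have harg : r * (1 + r - 2 * ε) / (ε - r) ^ 2 ≤ 1 := by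
        rw [div_le_one (by positivity)]
        nlinarith
      have := (Real.log_nonpos_iff hpos.le).mpr harg
      nlinarith
end

section
/- For 0 < r < 1 and β₁ ∈ ℝ, with ε* = (e^{β₁}(1+r)+r)/(2e^{β₁}+1), one has r ≤ (ε*)² if and only if β₁ ≥ log(√r/(1−√r)). Consequently the limiting conditional free energy density ψ(β₁,r) is increasing in r exactly when β₁ ≥ log(√r/(1−√r)). -/
open Real

theorem stmt_13 (β₁ r : ℝ) (hr0 : 0 < r) (hr1 : r < 1)
    (ε : ℝ) (hε : ε = (Real.exp β₁ * (1 + r) + r) / (2 * Real.exp β₁ + 1)) :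
    r ≤ ε ^ 2 ↔ Real.log (Real.sqrt r / (1 - Real.sqrt r)) ≤ β₁ := by
  set s := Real.sqrt r with hs
  have hs0 : 0 < s := Real.sqrt_pos.mpr hr0
  have hs1 : s < 1 := by
    rw [hs, show (1:ℝ) = Real.sqrt 1 by simp]
    exact Real.sqrt_lt_sqrt hr0.le hr1
  have hsr : s ^ 2 = r := Real.sq_sqrt hr0.le
  have he : 0 < Real.exp β₁ := Real.exp_pos β₁
  set e := Real.exp β₁ with hee
  have hD : 0 < 2 * e + 1 := by linarith
  have hεpos : 0 < ε := by
    rw [hε]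
    apply div_pos _ hD
    nlinarith
  have h1s : 0 < 1 - s := by linarith
  have h1 : r ≤ ε ^ 2 ↔ s ≤ ε := by
    constructor
    · intro h
      nlinarith [sq_nonneg (s - ε)]
    · intro h
      nlinarith
  have h2 : s ≤ ε ↔ s / (1 - s) ≤ e := by
    rw [hε, le_div_iff₀ hD, div_le_iff₀ h1s]
    constructor
    · intro h
      nlinarith [mul_pos he h1s]
    · intro h
      nlinarith [mul_pos he h1s]
  have h3 : Real.log (s / (1 - s)) ≤ β₁ ↔ s / (1 - s) ≤ e := by
    rw [hee, Real.log_le_iff_le_exp (div_pos hs0 h1s)]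
  rw [h1, h2, h3]
end

section
/- For β₂ ≠ 0 and 0 < ε < 1, with r* the smaller root of (e^{2β₂}−1)r² − (2εe^{2β₂}−2ε+1)r + ε²e^{2β₂} = 0, the inequality 1 + 2r* ≥ 3ε holds if and only if ε ≤ (e^{2β₂}+1)/(e^{2β₂}+3). -/
open Real

theorem stmt_14 (β₂ ε : ℝ) (hβ : β₂ ≠ 0) (h0 : 0 < ε) (h1 : ε < 1)
    (r : ℝ)
    (hr : r = ((2 * ε * Real.exp (2 * β₂) - 2 * ε + 1)
        - Real.sqrt ((2 * ε - 1) ^ 2 + 4 * ε * (1 - ε) * Real.exp (2 * β₂)))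
        / (2 * (Real.exp (2 * β₂) - 1))) :
    3 * ε ≤ 1 + 2 * r ↔ ε ≤ (Real.exp (2 * β₂) + 1) / (Real.exp (2 * β₂) + 3) := by
  set t := Real.exp (2 * β₂) with htdef
  have ht : 0 < t := Real.exp_pos _
  have htne : t ≠ 1 := by
    rw [htdef, Ne, Real.exp_eq_one_iff]
    intro h
    exact hβ (by linarith)
  set s := Real.sqrt ((2 * ε - 1) ^ 2 + 4 * ε * (1 - ε) * t) with hsdef
  have hεt : 0 < 4 * ε * (1 - ε) * t := by
    apply mul_pos (mul_pos (by linarith) (by linarith)) ht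
  have hD : (0:ℝ) ≤ (2 * ε - 1) ^ 2 + 4 * ε * (1 - ε) * t := by
    have := sq_nonneg (2 * ε - 1); linarith
  have hs0 : 0 ≤ s := Real.sqrt_nonneg _
  have hs2 : s ^ 2 = (2 * ε - 1) ^ 2 + 4 * ε * (1 - ε) * t := Real.sq_sqrt hD
  have hB : 0 < t * (1 - ε) + ε := by nlinarith
  have htsub : t - 1 ≠ 0 := sub_ne_zero.mpr htne
  have hr' : 2 * (t - 1) * r = (2 * ε * t - 2 * ε + 1) - s := by
    rw [hr]; field_simp
  have hdiv : (ε ≤ (t + 1) / (t + 3)) ↔ 0 ≤ t * (1 - ε) + 1 - 3 * ε := by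
    rw [le_div_iff₀ (by linarith)]
    constructor <;> intro <;> nlinarith
  rw [hdiv]
  rcases htne.lt_or_gt with ht1 | ht1
  · -- t < 1
    constructor
    · intro h
      have hsB : t * (1 - ε) + ε ≤ s := by
        linarith [mul_nonneg (by linarith : (0:ℝ) ≤ 1 - t)
          (by linarith : 0 ≤ 2 * r - (3 * ε - 1)), hr']
      have hDB : (t * (1 - ε) + ε) ^ 2 ≤ s ^ 2 := by
        nlinarith [hs0, hB, hsB]
      by_contra hc
      push_neg at hc
      have hp : (1 - ε) * (t - 1) * (t * (1 - ε) + 1 - 3 * ε) > 0 :=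
        mul_pos_of_neg_of_neg (mul_neg_of_pos_of_neg (by linarith) (by linarith)) hc
      linarith [hs2, hDB, hp]
    · intro h
      have hp : (1 - ε) * (t - 1) * (t * (1 - ε) + 1 - 3 * ε) ≤ 0 :=
        mul_nonpos_of_nonpos_of_nonneg
          (mul_nonpos_of_nonneg_of_nonpos (by linarith) (by linarith)) h
      have hDB : (t * (1 - ε) + ε) ^ 2 ≤ s ^ 2 := by linarith [hs2, hp]
      have hsB : t * (1 - ε) + ε ≤ s := by nlinarith [hs0, hB, hDB]
      have key : 2 * (t - 1) * r ≤ (3 * ε - 1) * (t - 1) := by linarith [hr', hsB]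
      have h4 : (1 - t) * (3 * ε - 1) ≤ (1 - t) * (2 * r) := by linarith [key]
      have := le_of_mul_le_mul_left h4 (by linarith : (0:ℝ) < 1 - t)
      linarith
  · -- 1 < t
    constructor
    · intro h
      have hsB : s ≤ t * (1 - ε) + ε := by
        linarith [mul_nonneg (by linarith : (0:ℝ) ≤ t - 1)
          (by linarith : 0 ≤ 2 * r - (3 * ε - 1)), hr']
      have hDB : s ^ 2 ≤ (t * (1 - ε) + ε) ^ 2 := by
        nlinarith [hs0, hB, hsB]
      by_contra hc
      push_neg at hc
      have hp : (1 - ε) * (t - 1) * (t * (1 - ε) + 1 - 3 * ε) < 0 :=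
        mul_neg_of_pos_of_neg (mul_pos (by linarith) (by linarith)) hc
      linarith [hs2, hDB, hp]
    · intro h
      have hp : 0 ≤ (1 - ε) * (t - 1) * (t * (1 - ε) + 1 - 3 * ε) :=
        mul_nonneg (mul_nonneg (by linarith) (by linarith)) h
      have hDB : s ^ 2 ≤ (t * (1 - ε) + ε) ^ 2 := by linarith [hs2, hp]
      have hsB : s ≤ t * (1 - ε) + ε := by nlinarith [hs0, hB, hDB]
      have key : (3 * ε - 1) * (t - 1) ≤ 2 * (t - 1) * r := by linarith [hr', hsB]
      have h4 : (t - 1) * (3 * ε - 1) ≤ (t - 1) * (2 * r) := by linarith [key]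
      have := le_of_mul_le_mul_left h4 (by linarith : (0:ℝ) < t - 1)
      linarith
end

section
/- Let αₙ → ∞ be positive and Zₙ(β₁,β₂) = (1 + 2e^{αₙβ₁} + e^{2αₙ(β₁+β₂)})^{n(n-1)/2}. If β₁ < 0 and β₁ + β₂ < 0 then Zₙ^{1/n²} → 1; if β₁ < 0 and β₁ + β₂ = 0 then Zₙ^{1/n²} → √2; if β₁ = 0 and β₂ < 0 then Zₙ^{1/n²} → √3; if β₁ = β₂ = 0 then Zₙ^{1/n²} → 2. -/
open Real Filter

lemma choose_div_sq_aux : Tendsto (fun n : ℕ => (n.choose 2 : ℝ) / (n:ℝ)^2) atTop (nhds (1/2)) := by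
  have h0 : Tendsto (fun n : ℕ => 1 / (n:ℝ)) atTop (nhds 0) :=
    tendsto_one_div_atTop_nhds_zero_nat
  have h2 : Tendsto (fun n : ℕ => (1 - 1/(n:ℝ))/2) atTop (nhds (1/2)) := by
    have h1 : Tendsto (fun n : ℕ => (1 : ℝ) - 1/(n:ℝ)) atTop (nhds 1) := by
      simpa using tendsto_const_nhds.sub h0
    simpa using h1.div_const 2
  refine h2.congr' ?_
  filter_upwards [eventually_ge_atTop 1] with n hn
  have hn' : (n:ℝ) ≠ 0 := by
    have : (1:ℝ) ≤ (n:ℝ) := by exact_mod_cast hn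
    linarith
  rw [Nat.cast_choose_two]
  field_simp

lemma key_aux (B : ℕ → ℝ) (L : ℝ) (hB : ∀ n, 1 ≤ B n) (hL : Tendsto B atTop (nhds L)) :
    Tendsto (fun n : ℕ => (B n ^ n.choose 2) ^ ((1:ℝ)/(n:ℝ)^2)) atTop (nhds (Real.sqrt L)) := by
  have hL1 : 1 ≤ L := ge_of_tendsto' hL hB
  have hLpos : 0 < L := by linarith
  have hlog : Tendsto (fun n => Real.log (B n)) atTop (nhds (Real.log L)) :=
    hL.log (ne_of_gt hLpos)
  have hmul : Tendsto (fun n : ℕ => ((n.choose 2 : ℝ) / (n:ℝ)^2) * Real.log (B n))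
      atTop (nhds ((1/2) * Real.log L)) := choose_div_sq_aux.mul hlog
  have hexp : Tendsto (fun n : ℕ => Real.exp (((n.choose 2 : ℝ) / (n:ℝ)^2) * Real.log (B n)))
      atTop (nhds (Real.exp ((1/2) * Real.log L))) := (Real.continuous_exp.tendsto _).comp hmul
  have hsqrt : Real.sqrt L = Real.exp ((1/2) * Real.log L) := by
    rw [Real.sqrt_eq_rpow, Real.rpow_def_of_pos hLpos]
    ring_nf
  rw [hsqrt]
  refine hexp.congr' ?_
  filter_upwards [eventually_ge_atTop 1] with n hn
  have hBpos : 0 < B n := lt_of_lt_of_le one_pos (hB n)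
  have hpowpos : 0 < B n ^ n.choose 2 := pow_pos hBpos _
  rw [Real.rpow_def_of_pos hpowpos, Real.log_pow]
  congr 1
  ring

theorem stmt_17 (β₁ β₂ : ℝ) (α : ℕ → ℝ) (hαpos : ∀ n, 0 < α n)
    (hα : Tendsto α atTop atTop)
    (Z : ℕ → ℝ)
    (hZ : ∀ n, Z n = (1 + 2 * Real.exp (α n * β₁)
        + Real.exp (2 * α n * (β₁ + β₂))) ^ (n.choose 2)) :
    (β₁ < 0 → β₁ + β₂ < 0 →
      Tendsto (fun n : ℕ => (Z n) ^ ((1 : ℝ) / (n : ℝ) ^ 2)) atTop (nhds 1)) ∧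
    (β₁ < 0 → β₁ + β₂ = 0 →
      Tendsto (fun n : ℕ => (Z n) ^ ((1 : ℝ) / (n : ℝ) ^ 2)) atTop (nhds (Real.sqrt 2))) ∧
    (β₁ = 0 → β₂ < 0 →
      Tendsto (fun n : ℕ => (Z n) ^ ((1 : ℝ) / (n : ℝ) ^ 2)) atTop (nhds (Real.sqrt 3))) ∧
    (β₁ = 0 → β₂ = 0 →
      Tendsto (fun n : ℕ => (Z n) ^ ((1 : ℝ) / (n : ℝ) ^ 2)) atTop (nhds 2)) := by
  set B : ℕ → ℝ := fun n => 1 + 2 * Real.exp (α n * β₁) + Real.exp (2 * α n * (β₁ + β₂)) with hBdef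
  have hB1 : ∀ n, 1 ≤ B n := by
    intro n
    have h1 : 0 < Real.exp (α n * β₁) := Real.exp_pos _
    have h2 : 0 < Real.exp (2 * α n * (β₁ + β₂)) := Real.exp_pos _
    simp only [hBdef]; linarith
  have hZB : ∀ n, Z n = B n ^ n.choose 2 := fun n => hZ n
  have main : ∀ L : ℝ, Tendsto B atTop (nhds L) →
      Tendsto (fun n : ℕ => (Z n) ^ ((1 : ℝ) / (n : ℝ) ^ 2)) atTop (nhds (Real.sqrt L)) := by
    intro L hL
    have := key_aux B L hB1 hL
    refine this.congr ?_
    intro n; rw [hZB n]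
  -- helper: exp(α n * c) → 0 when c < 0
  have hneg : ∀ c : ℝ, c < 0 → Tendsto (fun n => Real.exp (α n * c)) atTop (nhds 0) := by
    intro c hc
    have h1 : Tendsto (fun n => α n * c) atTop atBot := hα.atTop_mul_const_of_neg hc
    exact Real.tendsto_exp_atBot.comp h1
  refine ⟨?_, ?_, ?_, ?_⟩
  · intro h1 h2
    have hBlim : Tendsto B atTop (nhds 1) := by
      have e1 := hneg β₁ h1
      have e2 : Tendsto (fun n => Real.exp (2 * α n * (β₁ + β₂))) atTop (nhds 0) := by
        have := hneg (2 * (β₁ + β₂)) (by linarith)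
        refine this.congr fun n => ?_
        ring_nf
      have : Tendsto B atTop (nhds (1 + 2 * 0 + 0)) :=
        (tendsto_const_nhds.add (e1.const_mul 2)).add e2
      simpa using this
    simpa using main 1 hBlim
  · intro h1 h2
    have hBlim : Tendsto B atTop (nhds 2) := by
      have e1 := hneg β₁ h1
      have : Tendsto B atTop (nhds (1 + 2 * 0 + 1)) := by
        refine ((tendsto_const_nhds.add (e1.const_mul 2)).add tendsto_const_nhds).congr
          fun n => ?_
        simp [hBdef, h2]
      norm_num at this; exact this
    simpa using main 2 hBlim
  · intro h1 h2
    have hBlim : Tendsto B atTop (nhds 3) := by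
      have e2 : Tendsto (fun n => Real.exp (2 * α n * (β₁ + β₂))) atTop (nhds 0) := by
        have := hneg (2 * β₂) (by linarith)
        refine this.congr fun n => ?_
        rw [h1]; ring_nf
      have : Tendsto B atTop (nhds (1 + 2 * 1 + 0)) := by
        refine ((tendsto_const_nhds.add tendsto_const_nhds).add e2).congr fun n => ?_
        simp [hBdef, h1]
      norm_num at this; exact this
    simpa using main 3 hBlim
  · intro h1 h2
    have hBlim : Tendsto B atTop (nhds 4) := by
      have : B = fun _ => 4 := by
        funext n; simp [hBdef, h1, h2]; norm_num
      rw [this]; exact tendsto_const_nhds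
    have h4 : Real.sqrt 4 = 2 := by
      rw [show (4:ℝ) = 2^2 by norm_num, Real.sqrt_sq (by norm_num : (0:ℝ) ≤ 2)]
    have := main 4 hBlim
    rwa [h4] at this
end
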